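/- Let X be a Hilbert space, (e^{tA}) a strongly continuous unitary group on X with generator A, and C ∈ 𝓛(X) satisfying the observability inequality ‖W0‖² ≤ K² ∫₀ᵀ ‖C e^{tA} W0‖² dt. Let Π be the orthogonal projection of L²([0,T];X) onto the range of the observation map of free solutions. Then for every H ∈ L¹([0,T]; X) and every G ∈ L²([0,T]; X), there exists a unique mild solution W ∈ C⁰([0,T]; X) of ∂ₜW = AW + H (i.e. W(t) = e^{tA} W(0) + ∫₀ᵗ e^{(t-s)A} H(s) ds) satisfying Π(C W) = Π G. -/

import Mathlib

open MeasureTheory Set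
open scoped RealInnerProductSpace

set_option maxHeartbeats 1000000 in
/-- Duhamel formula/observation problem: under the observability
inequality for the unitary group `U t = e^{tA}` and `C ∈ 𝓛(X)`, for every
`H ∈ L¹([0,T];X)` and `G ∈ L²([0,T];X)` there exists a unique mild solution
`W ∈ C⁰([0,T];X)` of `∂ₜW = AW + H`, i.e.
`W t = e^{tA} W(0) + ∫₀ᵗ e^{(t-s)A} H(s) ds`, satisfying `Proj (C W) = Proj G`.
The condition `Proj (C W) = Proj G`, with `Proj` the orthogonal projection of
`L²([0,T];X)` onto the closed range of the observation map of free solutions, is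
expressed equivalently by the orthogonality of `t ↦ C(W t) − G t` to all free
observations `t ↦ C e^{tA} V0`. -/
theorem duhamel_observation_problem
    {X : Type*} [NormedAddCommGroup X] [InnerProductSpace ℝ X] [CompleteSpace X]
    (U : ℝ → X →L[ℝ] X) (hU0 : U 0 = 1)
    (hUgrp : ∀ s t : ℝ, U (s + t) = (U s).comp (U t))
    (hUcont : ∀ x : X, Continuous fun t => U t x)
    (hUunit : ∀ (t : ℝ) (x : X), ‖U t x‖ = ‖x‖)
    (C : X →L[ℝ] X) (T : ℝ) (hT : 0 < T) (K : ℝ) (hK : 0 < K)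
    (hobs : ∀ W0 : X, ‖W0‖ ^ 2 ≤ K ^ 2 * ∫ t in (0:ℝ)..T, ‖C (U t W0)‖ ^ 2)
    (H : ℝ → X) (hH : IntegrableOn H (Icc 0 T) volume)
    (G : ℝ → X) (hG : MemLp G 2 (volume.restrict (Icc 0 T))) :
    ∃ W : ℝ → X,
      (ContinuousOn W (Icc 0 T) ∧
        (∀ t ∈ Icc (0:ℝ) T, W t = U t (W 0) + ∫ s in (0:ℝ)..t, U (t - s) (H s)) ∧
        (∀ V0 : X, ∫ t in (0:ℝ)..T, ⟪C (W t) - G t, C (U t V0)⟫ = 0)) ∧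
      ∀ W' : ℝ → X,
        (ContinuousOn W' (Icc 0 T) ∧
          (∀ t ∈ Icc (0:ℝ) T, W' t = U t (W' 0) + ∫ s in (0:ℝ)..t, U (t - s) (H s)) ∧
          (∀ V0 : X, ∫ t in (0:ℝ)..T, ⟪C (W' t) - G t, C (U t V0)⟫ = 0)) →
        ∀ t ∈ Icc (0:ℝ) T, W' t = W t := by
  classical
  -- joint continuity of (t, x) ↦ U t x
  have hUjoint : Continuous fun p : ℝ × X => U p.1 p.2 := by
    rw [continuous_iff_continuousAt]
    rintro ⟨t₀, x₀⟩
    rw [ContinuousAt, tendsto_iff_dist_tendsto_zero]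
    have h1 : ∀ p : ℝ × X,
        dist (U p.1 p.2) (U t₀ x₀) ≤ dist p.2 x₀ + dist (U p.1 x₀) (U t₀ x₀) := by
      intro p
      calc dist (U p.1 p.2) (U t₀ x₀)
          ≤ dist (U p.1 p.2) (U p.1 x₀) + dist (U p.1 x₀) (U t₀ x₀) := dist_triangle _ _ _
        _ = dist p.2 x₀ + dist (U p.1 x₀) (U t₀ x₀) := by
            simp only [dist_eq_norm, ← map_sub, hUunit]
    have c1 : Continuous fun p : ℝ × X => dist p.2 x₀ + dist (U p.1 x₀) (U t₀ x₀) :=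
      (continuous_snd.dist continuous_const).add
        (((hUcont x₀).comp continuous_fst).dist continuous_const)
    have h2 := c1.tendsto (t₀, x₀)
    simp only [dist_self, add_zero] at h2
    exact squeeze_zero (fun p => dist_nonneg) h1 h2
  have hfin : IsFiniteMeasure (volume.restrict (Icc (0:ℝ) T)) :=
    ⟨by rw [Measure.restrict_apply_univ]; exact measure_Icc_lt_top⟩
  -- the shifted inhomogeneity and its primitive
  set F : ℝ → X := fun s => U (-s) (H s) with hF_def
  have hFm : AEStronglyMeasurable F (volume.restrict (Icc 0 T)) :=
    hUjoint.comp_aestronglyMeasurable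
      ((continuous_neg.aestronglyMeasurable).prodMk hH.aestronglyMeasurable)
  have hF : IntegrableOn F (Icc 0 T) volume := by
    refine Integrable.mono' hH.norm hFm ?_
    filter_upwards with s
    simp [hF_def, hUunit]
  set I : ℝ → X := fun t => ∫ s in (0:ℝ)..t, F s with hI_def
  have hIcont : ContinuousOn I (Icc 0 T) := by
    have := intervalIntegral.continuousOn_primitive_interval
      (a := (0:ℝ)) (b := T) (f := F) (μ := volume) (by rwa [uIcc_of_le hT.le])
    rwa [uIcc_of_le hT.le] at this
  have hFint : ∀ t ∈ Icc (0:ℝ) T, IntervalIntegrable F volume 0 t := by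
    intro t ht
    rw [intervalIntegrable_iff_integrableOn_Ioc_of_le ht.1]
    exact hF.mono_set (Ioc_subset_Icc_self.trans (Icc_subset_Icc le_rfl ht.2))
  have hDuh : ∀ t ∈ Icc (0:ℝ) T, (∫ s in (0:ℝ)..t, U (t - s) (H s)) = U t (I t) := by
    intro t ht
    have h1 : ∀ s, U (t - s) (H s) = U t (F s) := by
      intro s
      have := hUgrp t (-s)
      rw [show t + -s = t - s by ring] at this
      rw [this]; rfl
    calc (∫ s in (0:ℝ)..t, U (t - s) (H s)) = ∫ s in (0:ℝ)..t, U t (F s) := by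
          simp only [h1]
      _ = U t (I t) := (U t).intervalIntegral_comp_comm (hFint t ht)
  set D : ℝ → X := fun t => U t (I t) with hD_def
  have hDcont : ContinuousOn D (Icc 0 T) :=
    by have := hUjoint.comp_continuousOn ((continuousOn_id).prodMk hIcont); exact this
  -- the data term
  set f : ℝ → X := fun t => G t - C (D t) with hf_def
  have hGint : IntegrableOn G (Icc 0 T) volume := hG.integrable (by norm_num)
  have hDint : IntegrableOn (fun t => C (D t)) (Icc 0 T) volume :=
    (C.continuous.comp_continuousOn hDcont).integrableOn_Icc
  have hf : IntegrableOn f (Icc 0 T) volume := hGint.sub hDint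
  -- integrability of inner products against free observations
  have key : ∀ (ρ : ℝ → X), IntegrableOn ρ (Icc 0 T) volume → ∀ v : X,
      IntervalIntegrable (fun t => ⟪ρ t, C (U t v)⟫) volume 0 T := by
    intro ρ hρ v
    have hm : AEStronglyMeasurable (fun t => ⟪ρ t, C (U t v)⟫) (volume.restrict (Icc 0 T)) :=
      hρ.aestronglyMeasurable.inner
        ((C.continuous.comp (hUcont v)).aestronglyMeasurable)
    have hint : IntegrableOn (fun t => ⟪ρ t, C (U t v)⟫) (Icc 0 T) volume := by
      refine Integrable.mono' (hρ.norm.mul_const (‖C‖ * ‖v‖)) hm ?_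
      filter_upwards with t
      calc ‖⟪ρ t, C (U t v)⟫‖ ≤ ‖ρ t‖ * ‖C (U t v)‖ := norm_inner_le_norm _ _
        _ ≤ ‖ρ t‖ * (‖C‖ * ‖v‖) := by
            refine mul_le_mul_of_nonneg_left ?_ (norm_nonneg _)
            calc ‖C (U t v)‖ ≤ ‖C‖ * ‖U t v‖ := C.le_opNorm _
              _ = ‖C‖ * ‖v‖ := by rw [hUunit]
    have h2 : IntegrableOn (fun t => ⟪ρ t, C (U t v)⟫) (uIcc (0:ℝ) T) volume := by
      rwa [uIcc_of_le hT.le]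
    exact h2.intervalIntegrable
  -- the bilinear form
  have hcont2 : ∀ v w : X, Continuous fun t => ⟪C (U t v), C (U t w)⟫ := fun v w =>
    (C.continuous.comp (hUcont v)).inner (C.continuous.comp (hUcont w))
  set b : X → X → ℝ := fun v w => ∫ t in (0:ℝ)..T, ⟪C (U t v), C (U t w)⟫ with hb_def
  have hbint : ∀ v w : X, IntervalIntegrable (fun t => ⟪C (U t v), C (U t w)⟫) volume 0 T :=
    fun v w => (hcont2 v w).intervalIntegrable 0 T
  have hadd_l : ∀ v v' w : X, b (v + v') w = b v w + b v' w := by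
    intro v v' w
    rw [hb_def]
    simp only
    rw [← intervalIntegral.integral_add (hbint v w) (hbint v' w)]
    apply intervalIntegral.integral_congr
    intro t _
    simp [inner_add_left]
  have hsmul_l : ∀ (c : ℝ) (v w : X), b (c • v) w = c * b v w := by
    intro c v w
    rw [hb_def]
    simp only
    rw [← intervalIntegral.integral_const_mul]
    apply intervalIntegral.integral_congr
    intro t _
    simp [real_inner_smul_left]
  have hadd_r : ∀ v w w' : X, b v (w + w') = b v w + b v w' := by
    intro v w w'
    rw [hb_def]
    simp only
    rw [← intervalIntegral.integral_add (hbint v w) (hbint v w')]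
    apply intervalIntegral.integral_congr
    intro t _
    simp [inner_add_right]
  have hsmul_r : ∀ (c : ℝ) (v w : X), b v (c • w) = c * b v w := by
    intro c v w
    rw [hb_def]
    simp only
    rw [← intervalIntegral.integral_const_mul]
    apply intervalIntegral.integral_congr
    intro t _
    simp [real_inner_smul_right]
  have hbbound : ∀ v w : X, ‖b v w‖ ≤ T * ‖C‖ ^ 2 * ‖v‖ * ‖w‖ := by
    intro v w
    have h1 : ∀ t ∈ Set.uIoc (0:ℝ) T, ‖⟪C (U t v), C (U t w)⟫‖ ≤ ‖C‖ ^ 2 * ‖v‖ * ‖w‖ := by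
      intro t _
      calc ‖⟪C (U t v), C (U t w)⟫‖ ≤ ‖C (U t v)‖ * ‖C (U t w)‖ := norm_inner_le_norm _ _
        _ ≤ (‖C‖ * ‖U t v‖) * (‖C‖ * ‖U t w‖) :=
            mul_le_mul (C.le_opNorm _) (C.le_opNorm _) (norm_nonneg _)
              (by positivity)
        _ = ‖C‖ ^ 2 * ‖v‖ * ‖w‖ := by rw [hUunit, hUunit]; ring
    have := intervalIntegral.norm_integral_le_of_norm_le_const h1
    rw [sub_zero, abs_of_pos hT] at this
    calc ‖b v w‖ ≤ ‖C‖ ^ 2 * ‖v‖ * ‖w‖ * T := this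
      _ = T * ‖C‖ ^ 2 * ‖v‖ * ‖w‖ := by ring
  set Blin : X →ₗ[ℝ] X →ₗ[ℝ] ℝ := LinearMap.mk₂ ℝ b hadd_l hsmul_l hadd_r hsmul_r with hBlin_def
  set B : X →L[ℝ] X →L[ℝ] ℝ :=
    LinearMap.mkContinuous₂ Blin (T * ‖C‖ ^ 2) (fun v w => hbbound v w) with hB_def
  have hBapp : ∀ v w : X, B v w = b v w := fun v w => rfl
  have hcoer : IsCoercive B := by
    refine ⟨(K ^ 2)⁻¹, by positivity, fun u => ?_⟩
    have h1 := hobs u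
    have h2 : b u u = ∫ t in (0:ℝ)..T, ‖C (U t u)‖ ^ 2 := by
      apply intervalIntegral.integral_congr
      intro t _
      exact real_inner_self_eq_norm_sq _
    have hK2 : (0:ℝ) < K ^ 2 := by positivity
    have hsq : ‖u‖ * ‖u‖ = ‖u‖ ^ 2 := (sq ‖u‖).symm
    rw [hBapp, h2, mul_assoc, hsq, inv_mul_le_iff₀ hK2]
    exact h1
  -- the linear functional
  set ℓfun : X → ℝ := fun v => ∫ t in (0:ℝ)..T, ⟪f t, C (U t v)⟫ with hℓ_def
  have hℓint : ∀ v : X, IntervalIntegrable (fun t => ⟪f t, C (U t v)⟫) volume 0 T := key f hf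
  have hℓadd : ∀ v w : X, ℓfun (v + w) = ℓfun v + ℓfun w := by
    intro v w
    rw [hℓ_def]
    simp only
    rw [← intervalIntegral.integral_add (hℓint v) (hℓint w)]
    apply intervalIntegral.integral_congr
    intro t _
    simp [inner_add_right]
  have hℓsmul : ∀ (c : ℝ) (v : X), ℓfun (c • v) = c * ℓfun v := by
    intro c v
    rw [hℓ_def]
    simp only
    rw [← intervalIntegral.integral_const_mul]
    apply intervalIntegral.integral_congr
    intro t _
    simp [real_inner_smul_right]
  have hfnormII : IntervalIntegrable (fun t => ‖f t‖) volume 0 T := by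
    have h2 : IntegrableOn (fun t => ‖f t‖) (uIcc (0:ℝ) T) volume := by
      rw [uIcc_of_le hT.le]; exact hf.norm
    exact h2.intervalIntegrable
  have hℓbound : ∀ v : X, ‖ℓfun v‖ ≤ (|∫ t in (0:ℝ)..T, ‖f t‖| * ‖C‖) * ‖v‖ := by
    intro v
    have h1 : ∀ᵐ t ∂(volume.restrict (Set.uIoc (0:ℝ) T)),
        ‖⟪f t, C (U t v)⟫‖ ≤ ‖f t‖ * (‖C‖ * ‖v‖) := by
      filter_upwards with t
      calc ‖⟪f t, C (U t v)⟫‖ ≤ ‖f t‖ * ‖C (U t v)‖ := norm_inner_le_norm _ _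
        _ ≤ ‖f t‖ * (‖C‖ * ‖v‖) := by
            refine mul_le_mul_of_nonneg_left ?_ (norm_nonneg _)
            calc ‖C (U t v)‖ ≤ ‖C‖ * ‖U t v‖ := C.le_opNorm _
              _ = ‖C‖ * ‖v‖ := by rw [hUunit]
    have h2 := intervalIntegral.norm_integral_le_abs_of_norm_le h1
      (hfnormII.mul_const (‖C‖ * ‖v‖))
    rw [intervalIntegral.integral_mul_const, abs_mul,
      abs_of_nonneg (by positivity : (0:ℝ) ≤ ‖C‖ * ‖v‖)] at h2
    calc ‖ℓfun v‖ ≤ |∫ t in (0:ℝ)..T, ‖f t‖| * (‖C‖ * ‖v‖) := h2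
      _ = (|∫ t in (0:ℝ)..T, ‖f t‖| * ‖C‖) * ‖v‖ := by ring
  set L : X →L[ℝ] ℝ :=
    LinearMap.mkContinuous
      { toFun := ℓfun
        map_add' := hℓadd
        map_smul' := hℓsmul }
      (|∫ t in (0:ℝ)..T, ‖f t‖| * ‖C‖) hℓbound with hL_def
  have hLapp : ∀ v : X, L v = ℓfun v := fun v => rfl
  -- Riesz representation + Lax-Milgram
  set y : X := (InnerProductSpace.toDual ℝ X).symm L with hy_def
  have hy : ∀ w : X, ⟪y, w⟫ = L w := fun w => InnerProductSpace.toDual_symm_apply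
  set W0 : X := hcoer.continuousLinearEquivOfBilin.symm y with hW0_def
  have hW0key : ∀ w : X, b W0 w = ℓfun w := by
    intro w
    have h1 : ⟪hcoer.continuousLinearEquivOfBilin W0, w⟫ = B W0 w :=
      hcoer.continuousLinearEquivOfBilin_apply W0 w
    rw [hW0_def, ContinuousLinearEquiv.apply_symm_apply, hy] at h1
    rw [← hBapp, ← h1, hLapp]
  -- the solution
  set W : ℝ → X := fun t => U t W0 + D t with hW_def
  have hWcont : ContinuousOn W (Icc 0 T) := ((hUcont W0).continuousOn).add hDcont
  have hWzero : W 0 = W0 := by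
    simp [hW_def, hD_def, hI_def, hU0, intervalIntegral.integral_same]
  have hWmild : ∀ t ∈ Icc (0:ℝ) T, W t = U t (W 0) + ∫ s in (0:ℝ)..t, U (t - s) (H s) := by
    intro t ht
    rw [hWzero, hDuh t ht]
  have hWorth : ∀ V0 : X, (∫ t in (0:ℝ)..T, ⟪C (W t) - G t, C (U t V0)⟫) = 0 := by
    intro V0
    have heq : ∀ t : ℝ, ⟪C (W t) - G t, C (U t V0)⟫
        = ⟪C (U t W0), C (U t V0)⟫ - ⟪f t, C (U t V0)⟫ := by
      intro t
      rw [← inner_sub_left]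
      congr 1
      simp only [hW_def, hf_def, map_add]
      abel
    calc (∫ t in (0:ℝ)..T, ⟪C (W t) - G t, C (U t V0)⟫)
        = ∫ t in (0:ℝ)..T, (⟪C (U t W0), C (U t V0)⟫ - ⟪f t, C (U t V0)⟫) := by
          simp only [heq]
      _ = (∫ t in (0:ℝ)..T, ⟪C (U t W0), C (U t V0)⟫)
          - ∫ t in (0:ℝ)..T, ⟪f t, C (U t V0)⟫ :=
          intervalIntegral.integral_sub (hbint W0 V0) (hℓint V0)
      _ = b W0 V0 - ℓfun V0 := rfl
      _ = 0 := by rw [hW0key]; ring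
  refine ⟨W, ⟨hWcont, hWmild, hWorth⟩, ?_⟩
  -- uniqueness
  rintro W' ⟨hW'cont, hW'mild, hW'orth⟩
  set Δ : X := W' 0 - W 0 with hΔ_def
  have hdiff : ∀ t ∈ Icc (0:ℝ) T, W' t - W t = U t Δ := by
    intro t ht
    rw [hW'mild t ht, hWmild t ht, hΔ_def, map_sub]
    abel
  have hW'int : IntegrableOn (fun t => C (W' t) - G t) (Icc 0 T) volume :=
    ((C.continuous.comp_continuousOn hW'cont).integrableOn_Icc).sub hGint
  have hWint : IntegrableOn (fun t => C (W t) - G t) (Icc 0 T) volume :=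
    ((C.continuous.comp_continuousOn hWcont).integrableOn_Icc).sub hGint
  have horthΔ : (∫ t in (0:ℝ)..T, ⟪C (U t Δ), C (U t Δ)⟫) = 0 := by
    have h1 := intervalIntegral.integral_sub (key _ hW'int Δ) (key _ hWint Δ)
    calc (∫ t in (0:ℝ)..T, ⟪C (U t Δ), C (U t Δ)⟫)
        = ∫ t in (0:ℝ)..T,
            (⟪C (W' t) - G t, C (U t Δ)⟫ - ⟪C (W t) - G t, C (U t Δ)⟫) := by
          apply intervalIntegral.integral_congr
          intro t ht
          rw [uIcc_of_le hT.le] at ht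
          have e : C (W' t) - G t - (C (W t) - G t) = C (U t Δ) := by
            rw [sub_sub_sub_cancel_right, ← map_sub, hdiff t ht]
          calc ⟪C (U t Δ), C (U t Δ)⟫
              = ⟪C (W' t) - G t - (C (W t) - G t), C (U t Δ)⟫ := by rw [e]
            _ = ⟪C (W' t) - G t, C (U t Δ)⟫ - ⟪C (W t) - G t, C (U t Δ)⟫ :=
              inner_sub_left _ _ _
      _ = 0 := by rw [h1, hW'orth Δ, hWorth Δ, sub_zero]
  have hΔ0 : Δ = 0 := by
    have h2 : (∫ t in (0:ℝ)..T, ‖C (U t Δ)‖ ^ 2) = 0 := by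
      calc (∫ t in (0:ℝ)..T, ‖C (U t Δ)‖ ^ 2)
          = ∫ t in (0:ℝ)..T, ⟪C (U t Δ), C (U t Δ)⟫ := by
            apply intervalIntegral.integral_congr
            intro t _
            exact (real_inner_self_eq_norm_sq _).symm
        _ = 0 := horthΔ
    have h3 := hobs Δ
    rw [h2, mul_zero] at h3
    have : ‖Δ‖ = 0 := by nlinarith [norm_nonneg Δ]
    simpa using this
  intro t ht
  have := hdiff t ht
  rw [hΔ0, map_zero] at this
  rw [← sub_eq_zero]
  exact this
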